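/- Let Y ∈ ℝ^{D×N} with 1 ≤ K ≤ min(D,N), and suppose Y admits a singular value decomposition Y = Q Σ Rᵀ, where Q ∈ ℝ^{D×D} and R ∈ ℝ^{N×N} are orthogonal, Σ ∈ ℝ^{D×N} is rectangular-diagonal with singular values σ_1 ≥ σ_2 ≥ … ≥ 0 on its diagonal, and the top K+1 singular values are strictly separated: σ_1 > σ_2 > … > σ_K > σ_{K+1} ≥ 0 (with σ_{K+1} = 0 if K = min(D,N)). Let p be a probability mass function on {1,…,K} with p(b) > 0 for all b. Then every global minimizer (X*, Γ*) ∈ ℝ^{K×N} × ℝ^{D×K} of the nested dropout cost C(X,Γ) = Σ_{b=1}^{K} p(b)·‖Y − Γ^{(b)} X^{(b)}‖_F² is of the form X* = T Σ_K Rᵀ and Γ* = Q_K T⁻¹, where Σ_K ∈ ℝ^{K×N} consists of the first K rows of Σ, Q_K ∈ ℝ^{D×K} consists of the first K columns of Q, and T ∈ ℝ^{K×K} is some matrix that is commutative in its truncation and inversion. -/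

import Mathlib

open Matrix Finset

/-- The `b`-truncation cost `C⁽ᵇ⁾(X,Γ) = ‖Y − Γ⁽ᵇ⁾ X⁽ᵇ⁾‖_F²`. -/
noncomputable def truncCost {D N K : ℕ} (Y : Matrix (Fin D) (Fin N) ℝ)
    (X : Matrix (Fin K) (Fin N) ℝ) (G : Matrix (Fin D) (Fin K) ℝ) (b : ℕ) : ℝ :=
  ∑ i, ∑ j, (Y i j - ∑ k : Fin K, if (k : ℕ) < b then G i k * X k j else 0) ^ 2

/-- The nested dropout cost with mixing weights `p` (index `b : Fin K` encodes the
truncation `b+1`). -/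
noncomputable def ndCost {D N K : ℕ} (Y : Matrix (Fin D) (Fin N) ℝ) (p : Fin K → ℝ)
    (X : Matrix (Fin K) (Fin N) ℝ) (G : Matrix (Fin D) (Fin K) ℝ) : ℝ :=
  ∑ b : Fin K, p b * truncCost Y X G ((b : ℕ) + 1)

/-- The leading principal `b × b` minor of a `K × K` matrix. -/
def leadMinor {K : ℕ} (T : Matrix (Fin K) (Fin K) ℝ) (b : ℕ) (h : b ≤ K) :
    Matrix (Fin b) (Fin b) ℝ :=
  T.submatrix (Fin.castLE h) (Fin.castLE h)

/-- `T` is commutative in its truncation and inversion. -/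
def CommTruncInv {K : ℕ} (T : Matrix (Fin K) (Fin K) ℝ) : Prop :=
  IsUnit T ∧ ∀ (b : ℕ) (h : b ≤ K), 1 ≤ b →
    IsUnit (leadMinor T b h) ∧ leadMinor T⁻¹ b h = (leadMinor T b h)⁻¹

noncomputable def frob {m n : Type*} [Fintype m] [Fintype n] (A : Matrix m n ℝ) : ℝ :=
  ∑ i, ∑ j, (A i j)^2

lemma frob_eq_trace {m n : Type*} [Fintype m] [Fintype n] (A : Matrix m n ℝ) :
    frob A = (Aᵀ * A).trace := by
  unfold frob
  rw [Matrix.trace, Finset.sum_comm]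
  simp [Matrix.diag, Matrix.mul_apply, sq]

lemma frob_nonneg {m n : Type*} [Fintype m] [Fintype n] (A : Matrix m n ℝ) : 0 ≤ frob A :=
  Finset.sum_nonneg fun _ _ => Finset.sum_nonneg fun _ _ => sq_nonneg _

lemma frob_eq_zero {m n : Type*} [Fintype m] [Fintype n] {A : Matrix m n ℝ}
    (h : frob A = 0) : A = 0 := by
  ext i j
  have h1 : ∀ i ∈ (univ : Finset m), (0:ℝ) ≤ ∑ j, (A i j)^2 :=
    fun _ _ => Finset.sum_nonneg fun _ _ => sq_nonneg _
  have h2 := (Finset.sum_eq_zero_iff_of_nonneg h1).mp h i (mem_univ i)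
  have h3 := (Finset.sum_eq_zero_iff_of_nonneg (fun _ _ => sq_nonneg _)).mp h2 j (mem_univ j)
  simpa using sq_eq_zero_iff.mp h3

lemma frob_orth_left {D n : ℕ} {Q : Matrix (Fin D) (Fin D) ℝ} (hQ : Qᵀ * Q = 1)
    (A : Matrix (Fin D) (Fin n) ℝ) : frob (Q * A) = frob A := by
  rw [frob_eq_trace, frob_eq_trace, Matrix.transpose_mul]
  rw [show Aᵀ * Qᵀ * (Q * A) = Aᵀ * (Qᵀ * Q) * A by
    rw [Matrix.mul_assoc, Matrix.mul_assoc, Matrix.mul_assoc], hQ, Matrix.mul_one]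

lemma frob_orth_right {m N : ℕ} {R : Matrix (Fin N) (Fin N) ℝ} (hR : Rᵀ * R = 1)
    (A : Matrix (Fin m) (Fin N) ℝ) : frob (A * Rᵀ) = frob A := by
  rw [frob_eq_trace, frob_eq_trace, Matrix.transpose_mul, Matrix.transpose_transpose]
  have h1 : R * Aᵀ * (A * Rᵀ) = R * (Aᵀ * A) * Rᵀ := by
    rw [Matrix.mul_assoc, Matrix.mul_assoc, Matrix.mul_assoc]
  rw [h1, Matrix.trace_mul_comm, ← Matrix.mul_assoc, hR, Matrix.one_mul]

lemma inner_eq_sum {D : ℕ} (x y : EuclideanSpace ℝ (Fin D)) :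
    (inner ℝ x y : ℝ) = ∑ i, x i * y i := by
  simp [PiLp.inner_apply, RCLike.inner_apply, starRingEnd_apply, mul_comm]

lemma euclid_sum_apply {D : ℕ} {ι : Type*} (s : Finset ι) (f : ι → EuclideanSpace ℝ (Fin D)) (i : Fin D) :
    (∑ k ∈ s, f k) i = ∑ k ∈ s, f k i := by
  rw [WithLp.ofLp_sum, Finset.sum_apply]

lemma proj_exists {D : ℕ} (b : ℕ) (v : Fin b → EuclideanSpace ℝ (Fin D)) :
    ∃ P : Matrix (Fin D) (Fin D) ℝ, Pᵀ = P ∧ P * P = P ∧ P.trace ≤ (b:ℝ) ∧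
      ∀ x ∈ Submodule.span ℝ (Set.range v), P.mulVec x = x := by
  classical
  set V := Submodule.span ℝ (Set.range v) with hV
  have hd : Module.finrank ℝ V ≤ b := by
    refine (finrank_span_le_card _).trans ?_
    have := Fintype.card_range_le v
    rw [Set.toFinset_card]
    simpa using this
  set d := Module.finrank ℝ V with hdd
  let onb := stdOrthonormalBasis ℝ V
  let u : Fin d → EuclideanSpace ℝ (Fin D) := fun k => (onb k : EuclideanSpace ℝ (Fin D))
  have hinner : ∀ k l, (∑ i, u k i * u l i) = if k = l then (1:ℝ) else 0 := by
    intro k l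
    have h1 : (inner ℝ (u k) (u l) : ℝ) = inner ℝ (onb k) (onb l) := rfl
    rw [← inner_eq_sum, h1]
    exact orthonormal_iff_ite.mp onb.orthonormal k l
  have huV : ∀ k, u k ∈ V := fun k => (onb k).2
  set P : Matrix (Fin D) (Fin D) ℝ := Matrix.of (fun i j => ∑ k, u k i * u k j) with hPdef
  have hPapply : ∀ i j, P i j = ∑ k, u k i * u k j := fun i j => rfl
  have hfix : ∀ x ∈ V, P.mulVec x = x := by
    intro x hx
    have hrepr : ∑ k, (inner ℝ (u k) x : ℝ) • u k = x := by
      have h2 := onb.sum_repr ⟨x, hx⟩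
      have h3 : ∀ k, onb.repr ⟨x, hx⟩ k = (inner ℝ (u k) x : ℝ) := by
        intro k
        rw [onb.repr_apply_apply]
        rfl
      calc ∑ k, (inner ℝ (u k) x : ℝ) • u k
          = ((∑ k, onb.repr ⟨x, hx⟩ k • onb k : V) : EuclideanSpace ℝ (Fin D)) := by
            rw [Submodule.coe_sum]
            refine Finset.sum_congr rfl fun k _ => ?_
            rw [h3 k]
            rfl
        _ = x := by rw [h2]
    funext i
    have hxi : x i = ∑ k, (inner ℝ (u k) x : ℝ) * u k i := by
      conv_lhs => rw [← hrepr]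
      rw [euclid_sum_apply]
      exact Finset.sum_congr rfl fun k _ => by rw [PiLp.smul_apply, smul_eq_mul]
    show ∑ j, P i j * x j = x i
    rw [hxi]
    simp only [hPapply, inner_eq_sum, Finset.sum_mul]
    rw [Finset.sum_comm]
    refine Finset.sum_congr rfl fun k _ => ?_
    refine Finset.sum_congr rfl fun j _ => ?_
    ring
  have hcol : ∀ j, WithLp.toLp 2 (fun l => P l j) ∈ V := by
    intro j
    have : WithLp.toLp 2 (fun l => P l j) = ∑ k, (u k j) • u k := by
      ext l
      rw [euclid_sum_apply, PiLp.toLp_apply]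
      simp only [hPapply]
      exact Finset.sum_congr rfl fun k _ => by rw [PiLp.smul_apply, smul_eq_mul]; ring
    rw [this]
    exact Submodule.sum_mem _ fun k _ => Submodule.smul_mem _ _ (huV k)
  refine ⟨P, ?_, ?_, ?_, hfix⟩
  · ext i j
    simp only [Matrix.transpose_apply, hPapply]
    exact Finset.sum_congr rfl fun k _ => mul_comm _ _
  · ext i j
    have h4 : (P * P) i j = P.mulVec (fun l => P l j) i := by
      simp [Matrix.mul_apply, Matrix.mulVec, dotProduct]
    rw [h4]
    exact congrFun (hfix _ (hcol j)) i
  · rw [Matrix.trace]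
    calc ∑ i, Matrix.diag P i
        = ∑ k : Fin d, ∑ i, u k i * u k i := by
          simp only [Matrix.diag, hPapply]
          rw [Finset.sum_comm]
      _ = ∑ _k : Fin d, (1:ℝ) := by
          refine Finset.sum_congr rfl fun k _ => ?_
          have := hinner k k; simpa using this
      _ = d := by simp
      _ ≤ b := by exact_mod_cast hd

lemma sum_ite_lt {D b : ℕ} (hb : b ≤ D) (f : Fin D → ℝ) :
    ∑ i : Fin D, (if (i:ℕ) < b then f i else 0) = ∑ i : Fin b, f (Fin.castLE hb i) := by
  classical
  have L : ∑ i : Fin D, (if (i:ℕ) < b then f i else 0)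
      = ∑ i ∈ range D, (fun i => if h : i < D then (if i < b then f ⟨i, h⟩ else 0) else 0) i := by
    rw [← Fin.sum_univ_eq_sum_range]
    refine Finset.sum_congr rfl fun i _ => ?_
    simp [i.isLt]
  have R : ∑ i : Fin b, f (Fin.castLE hb i)
      = ∑ i ∈ range b, (fun i => if h : i < D then (if i < b then f ⟨i, h⟩ else 0) else 0) i := by
    rw [← Fin.sum_univ_eq_sum_range]
    refine Finset.sum_congr rfl fun i _ => ?_
    simp [i.isLt, lt_of_lt_of_le i.isLt hb]
    rfl
  rw [L, R]
  exact (Finset.sum_subset (Finset.range_subset_range.2 hb) (by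
    intro x hx hxb
    simp only [Finset.mem_range] at hx hxb
    simp [hx, hxb])).symm

lemma card_ind {D b : ℕ} (hb : b ≤ D) :
    ∑ i : Fin D, (if (i:ℕ) < b then (1:ℝ) else 0) = b := by
  rw [sum_ite_lt hb]; simp

lemma major_identity {D b : ℕ} (hb : b ≤ D) (lam h : Fin D → ℝ) (c : ℝ) :
    (∑ i : Fin D, (if (i:ℕ) < b then lam i else 0)) - ∑ i : Fin D, lam i * h i
    = (∑ i : Fin D, (if (i:ℕ) < b then (lam i - c)*(1-h i) else (c - lam i)*h i))
      + (c * (b:ℝ) - c * ∑ i, h i) := by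
  have hb' := card_ind hb
  have : c * (b:ℝ) - c * ∑ i, h i
      = ∑ i : Fin D, (c * (if (i:ℕ) < b then (1:ℝ) else 0) - c * h i) := by
    rw [Finset.sum_sub_distrib, ← Finset.mul_sum, ← Finset.mul_sum, hb']
  rw [this, ← Finset.sum_add_distrib, ← Finset.sum_sub_distrib]
  refine Finset.sum_congr rfl fun i _ => ?_
  by_cases hi : (i:ℕ) < b <;> simp [hi] <;> ring

lemma majorize {D b : ℕ} (hb : b ≤ D) (lam h : Fin D → ℝ) (c : ℝ) (hc : 0 ≤ c)
    (hlam1 : ∀ i : Fin D, (i:ℕ) < b → c ≤ lam i)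
    (hlam2 : ∀ i : Fin D, b ≤ (i:ℕ) → lam i ≤ c)
    (hh0 : ∀ i, 0 ≤ h i) (hh1 : ∀ i, h i ≤ 1) (hhs : ∑ i, h i ≤ (b:ℝ)) :
    ∑ i : Fin D, lam i * h i ≤ ∑ i : Fin D, (if (i:ℕ) < b then lam i else 0) := by
  have hid := major_identity hb lam h c
  have h1 : 0 ≤ ∑ i : Fin D, (if (i:ℕ) < b then (lam i - c)*(1-h i) else (c - lam i)*h i) := by
    refine Finset.sum_nonneg fun i _ => ?_
    by_cases hi : (i:ℕ) < b
    · simp only [hi, if_true]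
      exact mul_nonneg (by linarith [hlam1 i hi]) (by linarith [hh1 i])
    · simp only [hi, if_false]
      exact mul_nonneg (by linarith [hlam2 i (le_of_not_gt hi)]) (hh0 i)
  nlinarith [mul_nonneg hc (sub_nonneg.mpr hhs)]

lemma majorize_eq {D b : ℕ} (hb : b ≤ D) (lam h : Fin D → ℝ) (c : ℝ) (hc : 0 ≤ c)
    (hlam1 : ∀ i : Fin D, (i:ℕ) < b → c < lam i)
    (hlam2 : ∀ i : Fin D, b ≤ (i:ℕ) → lam i ≤ c)
    (hh0 : ∀ i, 0 ≤ h i) (hh1 : ∀ i, h i ≤ 1) (hhs : ∑ i, h i ≤ (b:ℝ))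
    (heq : ∑ i : Fin D, lam i * h i = ∑ i : Fin D, (if (i:ℕ) < b then lam i else 0)) :
    ∀ i : Fin D, h i = if (i:ℕ) < b then 1 else 0 := by
  have hid := major_identity hb lam h c
  rw [heq, sub_self] at hid
  set S := ∑ i : Fin D, (if (i:ℕ) < b then (lam i - c)*(1-h i) else (c - lam i)*h i) with hS
  have hSnn : 0 ≤ S := by
    refine Finset.sum_nonneg fun i _ => ?_
    by_cases hi : (i:ℕ) < b
    · simp only [hi, if_true]
      exact mul_nonneg (by linarith [hlam1 i hi]) (by linarith [hh1 i])
    · simp only [hi, if_false]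
      exact mul_nonneg (by linarith [hlam2 i (le_of_not_gt hi)]) (hh0 i)
  have hc2 : 0 ≤ c * (b:ℝ) - c * ∑ i, h i := by
    have := mul_nonneg hc (sub_nonneg.mpr hhs); linarith [this]
  have hS0 : S = 0 := by linarith
  have hterms := (Finset.sum_eq_zero_iff_of_nonneg (fun i _ => by
    by_cases hi : (i:ℕ) < b
    · simp only [hi, if_true]
      exact mul_nonneg (by linarith [hlam1 i hi]) (by linarith [hh1 i])
    · simp only [hi, if_false]
      exact mul_nonneg (by linarith [hlam2 i (le_of_not_gt hi)]) (hh0 i))).mp hS0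
  -- h i = 1 for i < b
  have hone : ∀ i : Fin D, (i:ℕ) < b → h i = 1 := by
    intro i hi
    have := hterms i (mem_univ i)
    simp only [hi, if_true] at this
    rcases mul_eq_zero.mp this with h' | h'
    · exfalso; have := hlam1 i hi; linarith
    · linarith
  -- now sum forces h i = 0 for i ≥ b
  have hsplit : ∑ i : Fin D, h i
      = ∑ i : Fin D, (if (i:ℕ) < b then (1:ℝ) else 0) + ∑ i : Fin D, (if (i:ℕ) < b then 0 else h i) := by
    rw [← Finset.sum_add_distrib]
    refine Finset.sum_congr rfl fun i _ => ?_
    by_cases hi : (i:ℕ) < b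
    · simp [hi, hone i hi]
    · simp [hi]
  have hcard := card_ind (D := D) hb
  have hzsum : ∑ i : Fin D, (if (i:ℕ) < b then 0 else h i) ≤ 0 := by
    rw [hcard] at hsplit; linarith
  have hzsum' : ∑ i : Fin D, (if (i:ℕ) < b then 0 else h i) = 0 := by
    refine le_antisymm hzsum (Finset.sum_nonneg fun i _ => ?_)
    by_cases hi : (i:ℕ) < b <;> simp [hi, hh0 i]
  have hzero := (Finset.sum_eq_zero_iff_of_nonneg (fun i _ => by
    by_cases hi : (i:ℕ) < b <;> simp [hi, hh0 i])).mp hzsum'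
  intro i
  by_cases hi : (i:ℕ) < b
  · simp [hi, hone i hi]
  · have := hzero i (mem_univ i)
    simp only [hi, if_false] at this
    simp [hi, this]

lemma frob_add {D N : ℕ} (A B : Matrix (Fin D) (Fin N) ℝ) :
    frob (A + B) = frob A + frob B + 2 * (Aᵀ * B).trace := by
  rw [frob_eq_trace, frob_eq_trace, frob_eq_trace, Matrix.transpose_add, Matrix.add_mul,
    Matrix.mul_add, Matrix.mul_add, Matrix.trace_add, Matrix.trace_add, Matrix.trace_add]
  have : (Bᵀ * A).trace = (Aᵀ * B).trace := by
    rw [← Matrix.trace_transpose (Bᵀ * A), Matrix.transpose_mul, Matrix.transpose_transpose]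
  rw [this]; ring

lemma pyth {D N : ℕ} (P : Matrix (Fin D) (Fin D) ℝ) (hs : Pᵀ = P) (hi : P * P = P)
    (Y M : Matrix (Fin D) (Fin N) ℝ) (hM : P * M = M) :
    frob (Y - M) = frob (P * Y - M) + (frob Y - (P * (Y * Yᵀ)).trace) := by
  have hA : Y - M = (P * Y - M) + (Y - P * Y) := by abel
  rw [hA, frob_add]
  have hPA : P * (P * Y - M) = P * Y - M := by
    rw [Matrix.mul_sub, ← Matrix.mul_assoc, hi, hM]
  have hcross : ((P * Y - M)ᵀ * (Y - P * Y)).trace = 0 := by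
    have h1 : (P * Y - M)ᵀ * P = (P * Y - M)ᵀ := by
      have e : (P * Y - M)ᵀ * P = (Pᵀ * (P * Y - M))ᵀ := by
        rw [Matrix.transpose_mul, Matrix.transpose_transpose]
      rw [e, hs, hPA]
    rw [Matrix.mul_sub, ← Matrix.mul_assoc, h1, sub_self, Matrix.trace_zero]
  have h2 : frob (Y - P * Y) = frob Y - (P * (Y * Yᵀ)).trace := by
    rw [frob_eq_trace, frob_eq_trace]
    have e2 : (P*Y)ᵀ*(P*Y) = Yᵀ*(P*Y) := by
      rw [Matrix.transpose_mul, Matrix.mul_assoc, ← Matrix.mul_assoc Pᵀ P Y, hs, hi]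
    have e3 : (P*Y)ᵀ*Y = Yᵀ*(P*Y) := by
      rw [Matrix.transpose_mul, Matrix.mul_assoc, hs]
    have e1 : (Y - P * Y)ᵀ * (Y - P * Y)
        = Yᵀ*Y - Yᵀ*(P*Y) - (Yᵀ*(P*Y) - Yᵀ*(P*Y)) := by
      rw [Matrix.transpose_sub, Matrix.sub_mul, Matrix.mul_sub, Matrix.mul_sub, e2, e3]
    rw [e1, sub_self, sub_zero, Matrix.trace_sub]
    congr 1
    rw [Matrix.trace_mul_comm, Matrix.mul_assoc]
  rw [hcross, h2]
  ring

lemma s_antitone {s : ℕ → ℝ} (hmono : ∀ i, s (i + 1) ≤ s i) :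
    ∀ m n : ℕ, m ≤ n → s n ≤ s m := by
  intro m n h
  induction n with
  | zero => simp_all
  | succ n ih =>
    rcases Nat.lt_or_ge m (n+1) with h' | h'
    · exact le_trans (hmono n) (ih (Nat.lt_succ_iff.mp h'))
    · have : m = n + 1 := le_antisymm h h'
      simp [this]

lemma s_strict_lt {K : ℕ} {s : ℕ → ℝ} (hmono : ∀ i, s (i + 1) ≤ s i)
    (hstrict : ∀ i, i < K → s (i + 1) < s i) :
    ∀ m n : ℕ, m < n → n ≤ K → s n < s m := by
  intro m n h hn
  have h1 : s n ≤ s (m+1) := s_antitone hmono (m+1) n h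
  have h2 : s (m+1) < s m := hstrict m (lt_of_lt_of_le h hn)
  linarith

lemma lam_row {D N : ℕ} {s : ℕ → ℝ} {Sig : Matrix (Fin D) (Fin N) ℝ}
    (hSig : ∀ (i : Fin D) (j : Fin N), Sig i j = if (i : ℕ) = (j : ℕ) then s (i : ℕ) else 0)
    (hzero : ∀ i, min D N ≤ i → s i = 0) (i : Fin D) :
    ∑ j : Fin N, (Sig i j)^2 = (s (i:ℕ))^2 := by
  by_cases hiN : (i:ℕ) < N
  · rw [Finset.sum_eq_single (⟨(i:ℕ), hiN⟩ : Fin N)]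
    · rw [hSig]; simp
    · intro j _ hj
      rw [hSig]
      have hne : (i:ℕ) ≠ (j:ℕ) := by
        intro hc
        exact hj (Fin.ext hc.symm)
      simp [hne]
    · simp
  · have hs0 : s (i:ℕ) = 0 := hzero _ (le_trans (min_le_right D N) (le_of_not_gt hiN))
    have hz : ∀ j : Fin N, Sig i j = 0 := by
      intro j
      rw [hSig]
      have hne : (i:ℕ) ≠ (j:ℕ) := fun hc => hiN (hc ▸ j.isLt)
      simp [hne]
    simp [hz, hs0]

lemma SigSigT {D N : ℕ} {s : ℕ → ℝ} {Sig : Matrix (Fin D) (Fin N) ℝ}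
    (hSig : ∀ (i : Fin D) (j : Fin N), Sig i j = if (i : ℕ) = (j : ℕ) then s (i : ℕ) else 0)
    (hzero : ∀ i, min D N ≤ i → s i = 0) :
    Sig * Sigᵀ = Matrix.diagonal (fun i : Fin D => (s (i:ℕ))^2) := by
  ext i i'
  rw [Matrix.mul_apply]
  by_cases hii : i = i'
  · subst hii
    simp only [Matrix.diagonal_apply_eq]
    rw [← lam_row hSig hzero i]
    refine Finset.sum_congr rfl fun j _ => ?_
    rw [Matrix.transpose_apply, sq]
  · rw [Matrix.diagonal_apply_ne _ hii]
    refine Finset.sum_eq_zero fun j _ => ?_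
    rw [Matrix.transpose_apply, hSig, hSig]
    by_cases h1 : (i:ℕ) = (j:ℕ)
    · have h2 : (i':ℕ) ≠ (j:ℕ) := by
        intro hc
        exact hii (Fin.ext (h1.trans hc.symm))
      simp [h1, h2]
    · simp [h1]

lemma cancel_left {n m : ℕ} {A B : Matrix (Fin n) (Fin n) ℝ} (h : A * B = 1)
    (Z : Matrix (Fin n) (Fin m) ℝ) : A * (B * Z) = Z := by
  rw [← Matrix.mul_assoc, h, Matrix.one_mul]

set_option maxHeartbeats 2000000 in
lemma per_b {D N K : ℕ} (hKD : K ≤ D) (hKN : K ≤ N)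
    (Q : Matrix (Fin D) (Fin D) ℝ) (R : Matrix (Fin N) (Fin N) ℝ)
    (hQ : Qᵀ * Q = 1) (hR : Rᵀ * R = 1)
    (s : ℕ → ℝ) (Sig : Matrix (Fin D) (Fin N) ℝ)
    (hSig : ∀ (i : Fin D) (j : Fin N), Sig i j = if (i : ℕ) = (j : ℕ) then s (i : ℕ) else 0)
    (hsnn : ∀ i, 0 ≤ s i) (hmono : ∀ i, s (i + 1) ≤ s i)
    (hzero : ∀ i, min D N ≤ i → s i = 0)
    (hstrict : ∀ i, i < K → s (i + 1) < s i)
    (b : ℕ) (hbK : b ≤ K)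
    (X : Matrix (Fin K) (Fin N) ℝ) (G : Matrix (Fin D) (Fin K) ℝ) :
    (∑ i : Fin D, (if (i:ℕ) < b then 0 else (s (i:ℕ))^2))
      ≤ frob (Q * Sig * Rᵀ
          - G * Matrix.diagonal (fun k : Fin K => if (k:ℕ) < b then (1:ℝ) else 0) * X)
    ∧ (frob (Q * Sig * Rᵀ
          - G * Matrix.diagonal (fun k : Fin K => if (k:ℕ) < b then (1:ℝ) else 0) * X)
        = ∑ i : Fin D, (if (i:ℕ) < b then 0 else (s (i:ℕ))^2) →
      G * Matrix.diagonal (fun k : Fin K => if (k:ℕ) < b then (1:ℝ) else 0) * X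
        = Q * (Matrix.diagonal (fun i : Fin D => if (i:ℕ) < b then (1:ℝ) else 0) * Sig) * Rᵀ
      ∧ Q * Matrix.diagonal (fun i : Fin D => if (i:ℕ) < b then (1:ℝ) else 0) * Qᵀ
          * (G * Matrix.diagonal (fun k : Fin K => if (k:ℕ) < b then (1:ℝ) else 0))
        = G * Matrix.diagonal (fun k : Fin K => if (k:ℕ) < b then (1:ℝ) else 0)) := by
  classical
  have hbD : b ≤ D := hbK.trans hKD
  have hQQT : Q * Qᵀ = 1 := mul_eq_one_comm.mp hQ
  have hRRT : R * Rᵀ = 1 := mul_eq_one_comm.mp hR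
  set lam : Fin D → ℝ := fun i => (s (i:ℕ))^2 with hlam
  set EK : Matrix (Fin K) (Fin K) ℝ :=
    Matrix.diagonal (fun k : Fin K => if (k:ℕ) < b then (1:ℝ) else 0) with hEK
  set Fb : Matrix (Fin D) (Fin D) ℝ :=
    Matrix.diagonal (fun i : Fin D => if (i:ℕ) < b then (1:ℝ) else 0) with hFb
  set Y : Matrix (Fin D) (Fin N) ℝ := Q * Sig * Rᵀ with hY
  set M : Matrix (Fin D) (Fin N) ℝ := G * EK * X with hM
  set v : Fin b → EuclideanSpace ℝ (Fin D) :=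
    fun k => WithLp.toLp 2 (fun i => G i (Fin.castLE hbK k)) with hv
  have hGEK : ∀ i k, (G * EK) i k = if (k:ℕ) < b then G i k else 0 := by
    intro i k
    rw [hEK, Matrix.mul_diagonal]
    by_cases hk : (k:ℕ) < b <;> simp [hk]
  have hMcol : ∀ j, WithLp.toLp 2 (fun i => M i j) ∈ Submodule.span ℝ (Set.range v) := by
    intro j
    have hMe : WithLp.toLp 2 (fun i => M i j) = ∑ k : Fin b, X (Fin.castLE hbK k) j • v k := by
      ext i
      rw [euclid_sum_apply, PiLp.toLp_apply]
      have e : M i j = ∑ k : Fin K, (if (k:ℕ) < b then G i k * X k j else 0) := by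
        rw [hM, Matrix.mul_apply]
        refine Finset.sum_congr rfl fun k _ => ?_
        rw [hGEK]
        by_cases hk : (k:ℕ) < b <;> simp [hk]
      rw [e, sum_ite_lt hbK (fun k => G i k * X k j)]
      refine Finset.sum_congr rfl fun k _ => ?_
      rw [PiLp.smul_apply, smul_eq_mul, hv]
      ring
    rw [hMe]
    exact Submodule.sum_mem _ fun k _ =>
      Submodule.smul_mem _ _ (Submodule.subset_span (Set.mem_range_self k))
  have hGcol : ∀ k : Fin K, WithLp.toLp 2 (fun i => (G * EK) i k) ∈ Submodule.span ℝ (Set.range v) := by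
    intro k
    by_cases hk : (k:ℕ) < b
    · have e : WithLp.toLp 2 (fun i => (G * EK) i k) = v ⟨(k:ℕ), hk⟩ := by
        ext i
        rw [PiLp.toLp_apply, hGEK, if_pos hk, hv, PiLp.toLp_apply]
        exact congrArg (G i) (Fin.ext rfl)
      rw [e]
      exact Submodule.subset_span (Set.mem_range_self _)
    · have e : WithLp.toLp 2 (fun i => (G * EK) i k) = (0 : EuclideanSpace ℝ (Fin D)) := by
        ext i
        rw [PiLp.toLp_apply, hGEK, if_neg hk]
        rfl
      rw [e]
      exact Submodule.zero_mem _
  obtain ⟨P, hPs, hPi, hPt, hPfix⟩ := proj_exists b v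
  have hPM : P * M = M := by
    ext i j
    simpa [Matrix.mul_apply, Matrix.mulVec, dotProduct] using
      congrFun (hPfix _ (hMcol j)) i
  have hPG : P * (G * EK) = G * EK := by
    ext i k
    simpa [Matrix.mul_apply, Matrix.mulVec, dotProduct] using
      congrFun (hPfix _ (hGcol k)) i
  have hpyth := pyth P hPs hPi Y M hPM
  have hYYT : Y * Yᵀ = Q * (Matrix.diagonal lam * Qᵀ) := by
    rw [hY]
    simp only [Matrix.transpose_mul, Matrix.transpose_transpose, Matrix.mul_assoc]
    rw [cancel_left hR, ← Matrix.mul_assoc Sig Sigᵀ Qᵀ, SigSigT hSig hzero]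
  set Pi' : Matrix (Fin D) (Fin D) ℝ := Qᵀ * (P * Q) with hPi'
  have hPi's : Pi'ᵀ = Pi' := by
    rw [hPi']
    simp only [Matrix.transpose_mul, Matrix.transpose_transpose, hPs, Matrix.mul_assoc]
  have hPi'i : Pi' * Pi' = Pi' := by
    rw [hPi']
    simp only [Matrix.mul_assoc]
    rw [cancel_left hQQT (P * Q), ← Matrix.mul_assoc P P Q, hPi]
  have hPi't : Pi'.trace = P.trace := by
    rw [hPi', Matrix.trace_mul_comm, Matrix.mul_assoc, hQQT, Matrix.mul_one]
  have htr : (P * (Y * Yᵀ)).trace = ∑ i, lam i * Pi' i i := by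
    rw [hYYT]
    have e1 : (P * (Q * (Matrix.diagonal lam * Qᵀ))).trace
        = (Pi' * Matrix.diagonal lam).trace := by
      rw [hPi', Matrix.trace_mul_comm]
      simp only [Matrix.mul_assoc]
      rw [Matrix.trace_mul_comm]
      simp only [Matrix.mul_assoc]
      rw [Matrix.trace_mul_comm]
      simp only [Matrix.mul_assoc]
    rw [e1, Matrix.trace]
    refine Finset.sum_congr rfl fun i _ => ?_
    rw [Matrix.diag, Matrix.mul_diagonal, mul_comm]
  have hPi'sym : ∀ i j, Pi' j i = Pi' i j := by
    intro i j
    conv_lhs => rw [← hPi's]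
    rfl
  have hdiag : ∀ i, Pi' i i = ∑ j, (Pi' i j)^2 := by
    intro i
    conv_lhs => rw [← hPi'i]
    rw [Matrix.mul_apply]
    refine Finset.sum_congr rfl fun j _ => ?_
    rw [hPi'sym i j, sq]
  have hh0 : ∀ i, 0 ≤ Pi' i i := by
    intro i
    rw [hdiag i]
    exact Finset.sum_nonneg fun j _ => sq_nonneg _
  have hh1 : ∀ i, Pi' i i ≤ 1 := by
    intro i
    have h1 : (Pi' i i)^2 ≤ Pi' i i := by
      conv_rhs => rw [hdiag i]
      exact Finset.single_le_sum (f := fun j => (Pi' i j)^2) (fun j _ => sq_nonneg _) (mem_univ i)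
    nlinarith [hh0 i]
  have hhs : ∑ i, Pi' i i ≤ (b:ℝ) := by
    have e : ∑ i, Pi' i i = Pi'.trace := rfl
    rw [e, hPi't]
    exact hPt
  have hlam2 : ∀ i : Fin D, b ≤ (i:ℕ) → lam i ≤ (s b)^2 := by
    intro i hi
    have h1 : s (i:ℕ) ≤ s b := s_antitone hmono b (i:ℕ) hi
    have h2 : 0 ≤ s (i:ℕ) := hsnn _
    simp only [hlam]
    nlinarith
  have hlam1 : ∀ i : Fin D, (i:ℕ) < b → (s b)^2 < lam i := by
    intro i hi
    have h1 : s b < s (i:ℕ) := s_strict_lt hmono hstrict (i:ℕ) b hi hbK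
    have h2 : 0 ≤ s b := hsnn _
    simp only [hlam]
    nlinarith
  have hcnn : (0:ℝ) ≤ (s b)^2 := sq_nonneg _
  have hfrobY : frob Y = ∑ i, lam i := by
    rw [hY, Matrix.mul_assoc, frob_orth_left hQ, frob_orth_right hR]
    unfold frob
    exact Finset.sum_congr rfl fun i _ => lam_row hSig hzero i
  have hmaj := majorize hbD lam (fun i => Pi' i i) ((s b)^2) hcnn
    (fun i hi => le_of_lt (hlam1 i hi)) hlam2 hh0 hh1 hhs
  have htail : ∑ i : Fin D, lam i - ∑ i : Fin D, (if (i:ℕ) < b then lam i else 0)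
      = ∑ i : Fin D, (if (i:ℕ) < b then 0 else lam i) := by
    rw [← Finset.sum_sub_distrib]
    refine Finset.sum_congr rfl fun i _ => ?_
    by_cases hi : (i:ℕ) < b <;> simp [hi]
  have hfP : 0 ≤ frob (P * Y - M) := frob_nonneg _
  have htgt : (∑ i : Fin D, if (i:ℕ) < b then 0 else (s (i:ℕ))^2)
      = ∑ i : Fin D, (if (i:ℕ) < b then 0 else lam i) := rfl
  constructor
  · rw [hpyth, htr, htgt, ← htail]
    linarith
  · intro heq
    rw [hpyth, htr, htgt, ← htail] at heq
    rw [hfrobY] at heq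
    have hmaj_eq : ∑ i, lam i * Pi' i i = ∑ i : Fin D, (if (i:ℕ) < b then lam i else 0) := by
      linarith
    have hfP0 : frob (P * Y - M) = 0 := by linarith
    have hMPY : M = P * Y := by
      have h2 : P * Y - M = 0 := frob_eq_zero hfP0
      have := sub_eq_zero.mp h2
      exact this.symm
    have hhvals := majorize_eq hbD lam (fun i => Pi' i i) ((s b)^2) hcnn hlam1 hlam2
      hh0 hh1 hhs hmaj_eq
    have hPi'Fb : Pi' = Fb := by
      ext i j
      by_cases hi : (i:ℕ) < b
      · by_cases hij : j = i
        · subst hij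
          rw [hFb, Matrix.diagonal_apply_eq]
          have := hhvals j
          simp only [hi, if_true] at this ⊢
          exact this
        · have h1 : Pi' i i = 1 := by
            have := hhvals i; simp only [hi, if_true] at this; exact this
          have h2 : ∑ k ∈ univ.erase i, (Pi' i k)^2 = 0 := by
            have h3 := hdiag i
            rw [← Finset.add_sum_erase univ (fun k => (Pi' i k)^2) (mem_univ i)] at h3
            rw [h1] at h3
            nlinarith
          have h4 := (Finset.sum_eq_zero_iff_of_nonneg
            (fun k (_ : k ∈ univ.erase i) => sq_nonneg (Pi' i k))).mp h2
          have h5 : (Pi' i j)^2 = 0 := h4 j (Finset.mem_erase.mpr ⟨hij, mem_univ j⟩)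
          have h6 : Pi' i j = 0 := by
            have := sq_eq_zero_iff.mp h5; exact this
          rw [h6, hFb, Matrix.diagonal_apply_ne _ (fun hc => hij hc.symm)]
      · have h1 : Pi' i i = 0 := by
          have := hhvals i; simp only [hi, if_false] at this; exact this
        have h2 : ∑ k : Fin D, (Pi' i k)^2 = 0 := by rw [← hdiag i, h1]
        have h4 := (Finset.sum_eq_zero_iff_of_nonneg
          (fun k (_ : k ∈ (univ : Finset (Fin D))) => sq_nonneg (Pi' i k))).mp h2
        have h5 : Pi' i j = 0 := sq_eq_zero_iff.mp (h4 j (mem_univ j))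
        rw [h5, hFb]
        by_cases hij : i = j
        · subst hij; rw [Matrix.diagonal_apply_eq]; simp [hi]
        · rw [Matrix.diagonal_apply_ne _ hij]
    have hPQF : P = Q * Fb * Qᵀ := by
      have h1 : Q * (Pi' * Qᵀ) = P := by
        rw [hPi']
        simp only [Matrix.mul_assoc]
        rw [cancel_left hQQT]
        rw [hQQT, Matrix.mul_one]
      rw [← h1, hPi'Fb, Matrix.mul_assoc]
    refine ⟨?_, ?_⟩
    · show M = Q * (Fb * Sig) * Rᵀ
      rw [hMPY, hPQF, hY]
      simp only [Matrix.mul_assoc]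
      rw [cancel_left hQ]
    · show Q * Fb * Qᵀ * (G * EK) = G * EK
      have e : Q * Fb * Qᵀ = P := hPQF.symm
      rw [e]
      exact hPG

lemma cancel_left' {k n m : ℕ} {A : Matrix (Fin k) (Fin n) ℝ} {B : Matrix (Fin n) (Fin k) ℝ}
    (h : A * B = 1) (Z : Matrix (Fin k) (Fin m) ℝ) : A * (B * Z) = Z := by
  rw [← Matrix.mul_assoc, h, Matrix.one_mul]

lemma cancel_right' {k n m : ℕ} {A : Matrix (Fin k) (Fin n) ℝ} {B : Matrix (Fin n) (Fin k) ℝ}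
    (h : A * B = 1) (Z : Matrix (Fin m) (Fin k) ℝ) : Z * A * B = Z := by
  rw [Matrix.mul_assoc, h, Matrix.mul_one]

/-- indicator diagonal matrix -/
def indD (n b : ℕ) : Matrix (Fin n) (Fin n) ℝ :=
  Matrix.diagonal (fun k : Fin n => if (k:ℕ) < b then (1:ℝ) else 0)

lemma truncCost_eq {D N K : ℕ} (Y : Matrix (Fin D) (Fin N) ℝ)
    (X : Matrix (Fin K) (Fin N) ℝ) (G : Matrix (Fin D) (Fin K) ℝ) (b : ℕ) :
    truncCost Y X G b = frob (Y - G * indD K b * X) := by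
  unfold truncCost frob
  refine Finset.sum_congr rfl fun i _ => Finset.sum_congr rfl fun j _ => ?_
  congr 1
  rw [Matrix.sub_apply]
  congr 1
  rw [Matrix.mul_apply]
  refine Finset.sum_congr rfl fun k _ => ?_
  rw [indD, Matrix.mul_diagonal]
  by_cases hk : (k:ℕ) < b <;> simp [hk]

lemma indD_K_eq_one {K : ℕ} : indD K K = 1 := by
  rw [indD, show (fun k : Fin K => if (k:ℕ) < K then (1:ℝ) else 0) = fun _ => 1 from
    funext fun k => if_pos k.isLt, Matrix.diagonal_one]

lemma QK_mul_ind {D N K b : ℕ} (hKD : K ≤ D) (hbK : b ≤ K)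
    (Q : Matrix (Fin D) (Fin D) ℝ) (Sig : Matrix (Fin D) (Fin N) ℝ) :
    Q.submatrix id (Fin.castLE hKD) * (indD K b * Sig.submatrix (Fin.castLE hKD) id)
      = Q * (indD D b * Sig) := by
  have hbD : b ≤ D := hbK.trans hKD
  ext i j
  rw [Matrix.mul_apply, Matrix.mul_apply]
  have hL : ∀ k : Fin K, Q.submatrix id (Fin.castLE hKD) i k
        * (indD K b * Sig.submatrix (Fin.castLE hKD) id) k j
      = if (k:ℕ) < b then Q i (Fin.castLE hKD k) * Sig (Fin.castLE hKD k) j else 0 := by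
    intro k
    rw [indD, Matrix.diagonal_mul, Matrix.submatrix_apply, Matrix.submatrix_apply]
    by_cases hk : (k:ℕ) < b <;> simp [hk]
  have hR : ∀ k : Fin D, Q i k * (indD D b * Sig) k j
      = if (k:ℕ) < b then Q i k * Sig k j else 0 := by
    intro k
    rw [indD, Matrix.diagonal_mul]
    by_cases hk : (k:ℕ) < b <;> simp [hk]
  rw [Finset.sum_congr rfl fun k _ => hL k, Finset.sum_congr rfl fun k _ => hR k,
    sum_ite_lt hbK, sum_ite_lt hbD]
  refine Finset.sum_congr rfl fun k _ => ?_
  rw [Fin.castLE_castLE]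

lemma QK_QKT {D K : ℕ} (hKD : K ≤ D) (Q : Matrix (Fin D) (Fin D) ℝ) :
    Q.submatrix id (Fin.castLE hKD) * (Q.submatrix id (Fin.castLE hKD))ᵀ
      = Q * indD D K * Qᵀ := by
  ext i j
  rw [Matrix.mul_apply, Matrix.mul_assoc, Matrix.mul_apply]
  have hR : ∀ k : Fin D, Q i k * (indD D K * Qᵀ) k j
      = if (k:ℕ) < K then Q i k * Q j k else 0 := by
    intro k
    rw [indD, Matrix.diagonal_mul, Matrix.transpose_apply]
    by_cases hk : (k:ℕ) < K <;> simp [hk]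
  rw [Finset.sum_congr rfl fun k _ => hR k, sum_ite_lt hKD]
  refine Finset.sum_congr rfl fun k _ => ?_
  rw [Matrix.submatrix_apply, Matrix.transpose_apply, Matrix.submatrix_apply]
  rfl

lemma QKT_QK {D K : ℕ} (hKD : K ≤ D) (Q : Matrix (Fin D) (Fin D) ℝ) (hQ : Qᵀ * Q = 1) :
    (Q.submatrix id (Fin.castLE hKD))ᵀ * Q.submatrix id (Fin.castLE hKD) = 1 := by
  ext k l
  rw [Matrix.mul_apply]
  have : ∀ i, (Q.submatrix id (Fin.castLE hKD))ᵀ k i * Q.submatrix id (Fin.castLE hKD) i l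
      = Qᵀ (Fin.castLE hKD k) i * Q i (Fin.castLE hKD l) := fun i => rfl
  rw [Finset.sum_congr rfl fun i _ => this i, ← Matrix.mul_apply, hQ]
  by_cases hkl : k = l
  · subst hkl; simp [Matrix.one_apply]
  · have : Fin.castLE hKD k ≠ Fin.castLE hKD l := by
      intro hc
      exact hkl (Fin.castLE_injective hKD hc)
    rw [Matrix.one_apply_ne this, Matrix.one_apply_ne hkl]

lemma SigK_SigKT {D N K : ℕ} (hKD : K ≤ D) (hKN : K ≤ N) {s : ℕ → ℝ}
    {Sig : Matrix (Fin D) (Fin N) ℝ}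
    (hSig : ∀ (i : Fin D) (j : Fin N), Sig i j = if (i : ℕ) = (j : ℕ) then s (i : ℕ) else 0) :
    Sig.submatrix (Fin.castLE hKD) id * (Sig.submatrix (Fin.castLE hKD) id)ᵀ
      = Matrix.diagonal (fun k : Fin K => (s (k:ℕ))^2) := by
  ext k l
  rw [Matrix.mul_apply]
  by_cases hkl : k = l
  · subst hkl
    rw [Matrix.diagonal_apply_eq]
    have : ∀ j : Fin N, Sig.submatrix (Fin.castLE hKD) id k j
          * (Sig.submatrix (Fin.castLE hKD) id)ᵀ j k
        = (Sig (Fin.castLE hKD k) j)^2 := by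
      intro j
      rw [Matrix.transpose_apply, Matrix.submatrix_apply, sq]
      rfl
    rw [Finset.sum_congr rfl fun j _ => this j]
    rw [Finset.sum_eq_single (⟨(k:ℕ), lt_of_lt_of_le k.isLt hKN⟩ : Fin N)]
    · rw [hSig]; simp
    · intro j _ hj
      rw [hSig]
      have hne : (k:ℕ) ≠ (j:ℕ) := fun hc => hj (Fin.ext hc.symm)
      simp [hne]
    · simp
  · rw [Matrix.diagonal_apply_ne _ hkl]
    refine Finset.sum_eq_zero fun j _ => ?_
    rw [Matrix.transpose_apply, Matrix.submatrix_apply, Matrix.submatrix_apply, hSig, hSig]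
    by_cases h1 : (k:ℕ) = (j:ℕ)
    · have h2 : (l:ℕ) ≠ (j:ℕ) := fun hc => hkl (Fin.ext (h1.trans hc.symm))
      simp [h1, h2]
    · simp [h1]

lemma diag_inv {n : ℕ} (v : Fin n → ℝ) (hv : ∀ k, v k ≠ 0) :
    (Matrix.diagonal v)⁻¹ = Matrix.diagonal (fun k => (v k)⁻¹) := by
  apply Matrix.inv_eq_right_inv
  rw [Matrix.diagonal_mul_diagonal]
  have e : (fun i => v i * (v i)⁻¹) = fun _ => (1:ℝ) := by
    funext k
    exact mul_inv_cancel₀ (hv k)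
  rw [e, Matrix.diagonal_one]

lemma diag_isUnit {n : ℕ} (v : Fin n → ℝ) (hv : ∀ k, v k ≠ 0) :
    IsUnit (Matrix.diagonal v) := by
  rw [Matrix.isUnit_iff_isUnit_det, Matrix.det_diagonal]
  exact (Finset.prod_ne_zero_iff.mpr (fun k _ => hv k)).isUnit

lemma leadMinor_diagonal {K b : ℕ} (h : b ≤ K) (w : Fin K → ℝ) :
    leadMinor (Matrix.diagonal w) b h
      = Matrix.diagonal (fun k : Fin b => w (Fin.castLE h k)) := by
  ext i j
  rw [leadMinor, Matrix.submatrix_apply]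
  by_cases hij : i = j
  · subst hij
    rw [Matrix.diagonal_apply_eq, Matrix.diagonal_apply_eq]
  · rw [Matrix.diagonal_apply_ne _ (fun hc => hij (Fin.castLE_injective h hc)),
      Matrix.diagonal_apply_ne _ hij]

lemma commTruncInv_diagonal {K : ℕ} (w : Fin K → ℝ) (hw : ∀ k, w k ≠ 0) :
    CommTruncInv (Matrix.diagonal w) := by
  refine ⟨diag_isUnit w hw, ?_⟩
  intro b h _
  refine ⟨?_, ?_⟩
  · rw [leadMinor_diagonal]
    exact diag_isUnit _ (fun k => hw _)
  · rw [diag_inv w hw, leadMinor_diagonal, leadMinor_diagonal,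
      diag_inv _ (fun k => hw (Fin.castLE h k))]

set_option maxHeartbeats 2000000 in
/-- Given an SVD `Y = Q Σ Rᵀ` with decreasing nonnegative singular values `s 0 ≥ s 1 ≥ …`
(0-based; `s i = 0` for `i ≥ min D N`) whose top `K+1` values are strictly separated,
every global minimizer of the nested dropout cost has the form
`X* = T Σ_K Rᵀ`, `Γ* = Q_K T⁻¹` for some `T` commutative in its truncation and
inversion. -/
theorem nd_minimizer_form
    {D N K : ℕ} (hK : 1 ≤ K) (hKD : K ≤ D) (hKN : K ≤ N)
    (Y : Matrix (Fin D) (Fin N) ℝ)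
    (Q : Matrix (Fin D) (Fin D) ℝ) (R : Matrix (Fin N) (Fin N) ℝ)
    (hQ : Qᵀ * Q = 1) (hR : Rᵀ * R = 1)
    (s : ℕ → ℝ) (Sig : Matrix (Fin D) (Fin N) ℝ)
    (hSig : ∀ (i : Fin D) (j : Fin N), Sig i j = if (i : ℕ) = (j : ℕ) then s (i : ℕ) else 0)
    (hsnn : ∀ i, 0 ≤ s i)
    (hmono : ∀ i, s (i + 1) ≤ s i)
    (hzero : ∀ i, min D N ≤ i → s i = 0)
    (hstrict : ∀ i, i < K → s (i + 1) < s i)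
    (hY : Y = Q * Sig * Rᵀ)
    (p : Fin K → ℝ) (hp : ∀ b, 0 < p b) (hsum : ∑ b, p b = 1)
    (Xs : Matrix (Fin K) (Fin N) ℝ) (Gs : Matrix (Fin D) (Fin K) ℝ)
    (hmin : ∀ (X : Matrix (Fin K) (Fin N) ℝ) (G : Matrix (Fin D) (Fin K) ℝ),
      ndCost Y p Xs Gs ≤ ndCost Y p X G) :
    ∃ T : Matrix (Fin K) (Fin K) ℝ, CommTruncInv T ∧
      Xs = T * (Sig.submatrix (Fin.castLE hKD) id * Rᵀ) ∧
      Gs = Q.submatrix id (Fin.castLE hKD) * T⁻¹ := by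
  classical
  set QK := Q.submatrix id (Fin.castLE hKD) with hQKdef
  set SigK := Sig.submatrix (Fin.castLE hKD) id with hSigKdef
  set X0 : Matrix (Fin K) (Fin N) ℝ := SigK * Rᵀ with hX0
  -- per-b bound and equality analysis for the minimizer
  have hper : ∀ b : ℕ, b ≤ K →
      (∑ i : Fin D, (if (i:ℕ) < b then 0 else (s (i:ℕ))^2)) ≤ truncCost Y Xs Gs b
      ∧ (truncCost Y Xs Gs b = ∑ i : Fin D, (if (i:ℕ) < b then 0 else (s (i:ℕ))^2) →
          Gs * indD K b * Xs = Q * (indD D b * Sig) * Rᵀ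
          ∧ Q * indD D b * Qᵀ * (Gs * indD K b) = Gs * indD K b) := by
    intro b hb
    rw [truncCost_eq Y Xs Gs b, hY]
    unfold indD
    exact per_b hKD hKN Q R hQ hR s Sig hSig hsnn hmono hzero hstrict b hb Xs Gs
  -- the candidate (X0, QK) attains the lower bound in each truncation
  have hcand : ∀ b : ℕ, b ≤ K → truncCost Y X0 QK b
      = ∑ i : Fin D, (if (i:ℕ) < b then 0 else (s (i:ℕ))^2) := by
    intro b hb
    rw [truncCost_eq]
    have e1 : QK * indD K b * X0 = Q * (indD D b * Sig) * Rᵀ := by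
      rw [hX0]
      calc QK * indD K b * (SigK * Rᵀ) = (QK * (indD K b * SigK)) * Rᵀ := by
            simp only [Matrix.mul_assoc]
        _ = Q * (indD D b * Sig) * Rᵀ := by rw [QK_mul_ind hKD hb]
    rw [e1, hY]
    have e2 : Q * Sig * Rᵀ - Q * (indD D b * Sig) * Rᵀ
        = Q * (Sig - indD D b * Sig) * Rᵀ := by
      rw [Matrix.mul_sub, Matrix.sub_mul]
    rw [e2, Matrix.mul_assoc, frob_orth_left hQ, frob_orth_right hR]
    unfold frob
    refine Finset.sum_congr rfl fun i _ => ?_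
    have e3 : ∀ j, (Sig - indD D b * Sig) i j = if (i:ℕ) < b then 0 else Sig i j := by
      intro j
      rw [Matrix.sub_apply, indD, Matrix.diagonal_mul]
      by_cases hi : (i:ℕ) < b <;> simp [hi]
    rw [Finset.sum_congr rfl fun j _ => by rw [e3 j]]
    by_cases hi : (i:ℕ) < b
    · simp [hi]
    · simp only [hi, if_false]
      exact lam_row hSig hzero i
  -- every truncation cost of the minimizer equals the lower bound
  have hsucc : ∀ b : Fin K, (b:ℕ) + 1 ≤ K := fun b => Nat.succ_le_of_lt b.isLt
  have heqb : ∀ b : Fin K, truncCost Y Xs Gs ((b:ℕ)+1)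
      = ∑ i : Fin D, (if (i:ℕ) < (b:ℕ)+1 then 0 else (s (i:ℕ))^2) := by
    have h1 : ndCost Y p Xs Gs ≤ ndCost Y p X0 QK := hmin X0 QK
    unfold ndCost at h1
    have h1' : ∑ b : Fin K, p b * truncCost Y Xs Gs ((b:ℕ)+1)
        ≤ ∑ b : Fin K, p b * ∑ i : Fin D, (if (i:ℕ) < (b:ℕ)+1 then 0 else (s (i:ℕ))^2) := by
      refine le_trans h1 (le_of_eq (Finset.sum_congr rfl fun b _ => ?_))
      rw [hcand _ (hsucc b)]
    have hnn : ∀ b ∈ (univ : Finset (Fin K)),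
        0 ≤ p b * (truncCost Y Xs Gs ((b:ℕ)+1)
          - ∑ i : Fin D, (if (i:ℕ) < (b:ℕ)+1 then 0 else (s (i:ℕ))^2)) := by
      intro b _
      exact mul_nonneg (le_of_lt (hp b)) (sub_nonneg.mpr (hper _ (hsucc b)).1)
    have hsum0 : ∑ b : Fin K, p b * (truncCost Y Xs Gs ((b:ℕ)+1)
        - ∑ i : Fin D, (if (i:ℕ) < (b:ℕ)+1 then 0 else (s (i:ℕ))^2)) = 0 := by
      have e : ∑ b : Fin K, p b * (truncCost Y Xs Gs ((b:ℕ)+1)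
          - ∑ i : Fin D, (if (i:ℕ) < (b:ℕ)+1 then 0 else (s (i:ℕ))^2))
          = ∑ b : Fin K, p b * truncCost Y Xs Gs ((b:ℕ)+1)
            - ∑ b : Fin K, p b * ∑ i : Fin D, (if (i:ℕ) < (b:ℕ)+1 then 0 else (s (i:ℕ))^2) := by
        rw [← Finset.sum_sub_distrib]
        exact Finset.sum_congr rfl fun b _ => by ring
      rw [e]
      refine le_antisymm (by linarith [h1']) ?_
      rw [← e]
      exact Finset.sum_nonneg hnn
    have hterm := (Finset.sum_eq_zero_iff_of_nonneg hnn).mp hsum0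
    intro b
    have h2 := hterm b (mem_univ b)
    rcases mul_eq_zero.mp h2 with h3 | h3
    · exact absurd h3 (ne_of_gt (hp b))
    · linarith [sub_eq_zero.mp h3]
  have hkey : ∀ b : Fin K,
      Gs * indD K ((b:ℕ)+1) * Xs = Q * (indD D ((b:ℕ)+1) * Sig) * Rᵀ
      ∧ Q * indD D ((b:ℕ)+1) * Qᵀ * (Gs * indD K ((b:ℕ)+1)) = Gs * indD K ((b:ℕ)+1) :=
    fun b => (hper _ (hsucc b)).2 (heqb b)
  -- specialize at b = K
  have hbK1 : ((⟨K-1, by omega⟩ : Fin K) : ℕ) + 1 = K := by simp; omega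
  have hkeyK := hkey ⟨K-1, by omega⟩
  rw [hbK1, indD_K_eq_one, Matrix.mul_one] at hkeyK
  obtain ⟨hGsXs, hProjG⟩ := hkeyK
  set C : Matrix (Fin K) (Fin K) ℝ := QKᵀ * Gs with hCdef
  have hQKtQK : QKᵀ * QK = 1 := QKT_QK hKD Q hQ
  have hGsQK : QK * C = Gs := by
    rw [hCdef, ← Matrix.mul_assoc, QK_QKT hKD Q]
    exact hProjG
  have hQSigK : Q * (indD D K * Sig) = QK * SigK := by
    rw [← QK_mul_ind hKD (le_refl K) Q Sig, indD_K_eq_one, Matrix.one_mul]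
  have hCXs : C * Xs = SigK * Rᵀ := by
    have e1 : QK * (C * Xs) = QK * (SigK * Rᵀ) := by
      rw [← Matrix.mul_assoc, hGsQK, hGsXs, hQSigK, Matrix.mul_assoc]
    have e2 := congrArg (fun Z => QKᵀ * Z) e1
    simpa only [cancel_left' hQKtQK] using e2
  set Dg : Matrix (Fin K) (Fin K) ℝ := Matrix.diagonal (fun k : Fin K => (s (k:ℕ))^2) with hDgdef
  have hDg : SigK * SigKᵀ = Dg := SigK_SigKT hKD hKN hSig
  have hsK : ∀ k : Fin K, s (k:ℕ) ≠ 0 := by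
    intro k
    have h1 : s K < s (k:ℕ) := s_strict_lt hmono hstrict (k:ℕ) K k.isLt le_rfl
    have h2 : 0 ≤ s K := hsnn K
    exact ne_of_gt (lt_of_le_of_lt h2 h1)
  set Dginv : Matrix (Fin K) (Fin K) ℝ :=
    Matrix.diagonal (fun k : Fin K => ((s (k:ℕ))^2)⁻¹) with hDginvdef
  have hDgDginv : Dg * Dginv = 1 := by
    rw [hDgdef, hDginvdef, Matrix.diagonal_mul_diagonal]
    have e : (fun k : Fin K => (s (k:ℕ))^2 * ((s (k:ℕ))^2)⁻¹) = fun _ => (1:ℝ) := by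
      funext k
      exact mul_inv_cancel₀ (pow_ne_zero 2 (hsK k))
    rw [e, Matrix.diagonal_one]
  have hSS1 : SigK * (SigKᵀ * Dginv) = 1 := by
    rw [← Matrix.mul_assoc, hDg, hDgDginv]
  have hCB : C * (Xs * (R * (SigKᵀ * Dginv))) = 1 := by
    rw [← Matrix.mul_assoc C Xs, hCXs, Matrix.mul_assoc SigK Rᵀ, cancel_left' hR, hSS1]
  have hdetC : IsUnit C.det := by
    have e := congrArg Matrix.det hCB
    rw [Matrix.det_mul, Matrix.det_one] at e
    exact IsUnit.of_mul_eq_one _ e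
  have hCinv : C⁻¹ * C = 1 := Matrix.nonsing_inv_mul C hdetC
  have hXsT : Xs = C⁻¹ * (SigK * Rᵀ) := by
    rw [← hCXs, cancel_left' hCinv]
  have hTinv : (C⁻¹)⁻¹ = C := Matrix.nonsing_inv_nonsing_inv C hdetC
  -- commutation with all leading indicators
  have hcomm : ∀ b : Fin K,
      C * indD K ((b:ℕ)+1) = indD K ((b:ℕ)+1) * C := by
    intro b
    obtain ⟨h1, _⟩ := hkey b
    set bb := (b:ℕ)+1 with hbb
    have hbbK : bb ≤ K := hsucc b
    have hRHS : Q * (indD D bb * Sig) * Rᵀ = QK * (indD K bb * (SigK * Rᵀ)) := by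
      rw [← QK_mul_ind hKD hbbK Q Sig]
      simp only [Matrix.mul_assoc]
      rfl
    rw [hRHS, ← hGsQK, hXsT] at h1
    have h2 := congrArg (fun Z => QKᵀ * Z) h1
    simp only [Matrix.mul_assoc] at h2
    rw [cancel_left' hQKtQK, cancel_left' hQKtQK] at h2
    -- h2 : C * (indD K bb * (C⁻¹ * (SigK * Rᵀ))) = indD K bb * (SigK * Rᵀ)
    have h3 := congrArg (fun Z => Z * (R * (SigKᵀ * Dginv))) h2
    simp only [Matrix.mul_assoc] at h3
    rw [cancel_left' hR, hSS1] at h3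
    simp only [Matrix.mul_one] at h3
    -- h3 : C * (indD K bb * C⁻¹) = indD K bb
    have h4 := congrArg (fun Z => Z * C) h3
    simp only [Matrix.mul_assoc] at h4
    rw [hCinv, Matrix.mul_one] at h4
    exact h4
  -- C is diagonal
  have hCoff : ∀ i j : Fin K, i ≠ j → C i j = 0 := by
    intro i j hij
    have hvij : (i:ℕ) ≠ (j:ℕ) := fun hc => hij (Fin.ext hc)
    rcases lt_or_gt_of_ne hvij with hlt | hgt
    · -- i < j : use b = i
      have h := congrFun (congrFun (hcomm ⟨(i:ℕ), i.isLt⟩) i) j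
      simp only [indD] at h
      rw [Matrix.mul_diagonal, Matrix.diagonal_mul] at h
      have e1 : ¬ ((j:ℕ) < (i:ℕ) + 1) := by omega
      have e2 : (i:ℕ) < (i:ℕ) + 1 := by omega
      simp only [e1, e2, if_true, if_false, mul_zero, one_mul] at h
      exact h.symm
    · -- j < i : use b = j
      have h := congrFun (congrFun (hcomm ⟨(j:ℕ), j.isLt⟩) i) j
      simp only [indD] at h
      rw [Matrix.mul_diagonal, Matrix.diagonal_mul] at h
      have e1 : (j:ℕ) < (j:ℕ) + 1 := by omega
      have e2 : ¬ ((i:ℕ) < (j:ℕ) + 1) := by omega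
      simp only [e1, e2, if_true, if_false, mul_one, zero_mul] at h
      exact h
  set dv : Fin K → ℝ := fun k => C k k with hdv
  have hCd : C = Matrix.diagonal dv := by
    ext i j
    by_cases hij : i = j
    · subst hij; rw [Matrix.diagonal_apply_eq]
    · rw [Matrix.diagonal_apply_ne _ hij]
      exact hCoff i j hij
  have hdvne : ∀ k, dv k ≠ 0 := by
    have e := hdetC
    rw [hCd, Matrix.det_diagonal] at e
    intro k
    exact Finset.prod_ne_zero_iff.mp e.ne_zero k (mem_univ k)
  refine ⟨C⁻¹, ?_, ?_, ?_⟩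
  · rw [hCd, diag_inv dv hdvne]
    exact commTruncInv_diagonal _ (fun k => inv_ne_zero (hdvne k))
  · exact hXsT
  · rw [hTinv, hGsQK]
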